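/- Let Φ : ℝ^p × ℝ^n → ℝ^n be continuously differentiable, fix θ ∈ ℝ^p and x₀ ∈ ℝ^n, and define the unrolled iterates x_0 = x₀, x_{i} = Φ(θ, x_{i-1}) for i ≥ 1. Suppose x_K → x* as K → ∞, that x* = Φ(θ, x*), and that the state Jacobian J := D₂Φ(θ, x*) has operator norm ‖J‖ < 1. Then I − J is invertible, and the derivative of the K-layer unrolling converges to the implicit-differentiation gradient: D_θ x_K(θ) = Σ_{i=1}^{K} (J_{K-1} ∘ ⋯ ∘ J_i) ∘ D₁Φ(θ, x_{i-1}) (with J_j := D₂Φ(θ, x_j)) converges in operator norm, as K → ∞, to (I − J)⁻¹ ∘ D₁Φ(θ, x*). -/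

import Mathlib

open scoped Topology

/-- `ordComp J i m` is the ordered composition `J (i+m-1) ∘ ⋯ ∘ J (i+1) ∘ J i`
of `m` operators (`J i` applied first); it is the identity when `m = 0`.
In particular `ordComp J i (K - i)` is `J_{K-1} ∘ ⋯ ∘ J_i` for `i ≤ K`. -/
noncomputable def ordComp {𝕜 : Type*} [NontriviallyNormedField 𝕜] {F : Type*}
    [NormedAddCommGroup F] [NormedSpace 𝕜 F]
    (J : ℕ → F →L[𝕜] F) (i : ℕ) : ℕ → (F →L[𝕜] F)
  | 0 => ContinuousLinearMap.id 𝕜 F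
  | m + 1 => (J (i + m)).comp (ordComp J i m)

lemma ordComp_sum_formula {𝕜 : Type*} [NontriviallyNormedField 𝕜] {F G : Type*}
    [NormedAddCommGroup F] [NormedSpace 𝕜 F] [NormedAddCommGroup G] [NormedSpace 𝕜 G]
    (J : ℕ → F →L[𝕜] F) (A : ℕ → G →L[𝕜] F) (D : ℕ → G →L[𝕜] F)
    (hD0 : D 0 = 0) (hDs : ∀ K, D (K + 1) = (J K).comp (D K) + A K) :
    ∀ K, D (K + 1) = ∑ i ∈ Finset.Icc 1 (K + 1),
      (ordComp J i (K + 1 - i)).comp (A (i - 1)) := by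
  intro K
  induction K with
  | zero => simp [hDs, hD0, ordComp]
  | succ K ih =>
    rw [hDs, ih, Finset.sum_Icc_succ_top (by omega : 1 ≤ K + 1 + 1)]
    have hstep : ∀ i ∈ Finset.Icc 1 (K + 1),
        (ordComp J i (K + 1 + 1 - i)).comp (A (i - 1)) =
        (J (K + 1)).comp ((ordComp J i (K + 1 - i)).comp (A (i - 1))) := by
      intro i hi
      simp only [Finset.mem_Icc] at hi
      have h1 : K + 1 + 1 - i = (K + 1 - i) + 1 := by omega
      have h2 : i + (K + 1 - i) = K + 1 := by omega
      rw [h1]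
      show ((J (i + (K + 1 - i))).comp (ordComp J i (K + 1 - i))).comp (A (i - 1)) = _
      rw [h2, ContinuousLinearMap.comp_assoc]
    rw [Finset.sum_congr rfl hstep, ← ContinuousLinearMap.comp_finset_sum]
    have h0 : K + 1 + 1 - (K + 1 + 1) = 0 := by omega
    rw [h0]
    show _ = _ + (ContinuousLinearMap.id 𝕜 F).comp (A (K + 1 + 1 - 1))
    simp

lemma tendsto_zero_of_rec (u c : ℕ → ℝ) (r : ℝ) (hr0 : 0 ≤ r) (hr1 : r < 1)
    (hu0 : ∀ K, 0 ≤ u K) (hc : Filter.Tendsto c Filter.atTop (𝓝 0))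
    (hrec : ∀ᶠ K in Filter.atTop, u (K + 1) ≤ r * u K + c K) :
    Filter.Tendsto u Filter.atTop (𝓝 0) := by
  rw [Metric.tendsto_atTop]
  intro ε hε
  have hε2 : 0 < ε / 2 := by positivity
  have h1r : 0 < 1 - r := by linarith
  have hcev : ∀ᶠ K in Filter.atTop, c K < (1 - r) * (ε / 2) :=
    hc.eventually_lt_const (by positivity)
  obtain ⟨N, hN⟩ := Filter.eventually_atTop.mp (hrec.and hcev)
  have key : ∀ m, u (N + m) ≤ r ^ m * u N + ε / 2 := by
    intro m
    induction m with
    | zero => simpa using by linarith [hu0 N]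
    | succ m ih =>
      have h1 := (hN (N + m) (by omega)).1
      have h2 := (hN (N + m) (by omega)).2
      have heq : N + (m + 1) = (N + m) + 1 := by omega
      have hmul : r * u (N + m) ≤ r * (r ^ m * u N + ε / 2) :=
        mul_le_mul_of_nonneg_left ih hr0
      have hpow : r * (r ^ m * u N) = r ^ (m + 1) * u N := by ring
      rw [heq]
      nlinarith
  have hgeo : Filter.Tendsto (fun m => r ^ m * u N) Filter.atTop (𝓝 0) := by
    simpa using (tendsto_pow_atTop_nhds_zero_of_lt_one hr0 hr1).mul_const (u N)
  obtain ⟨M, hM⟩ := Filter.eventually_atTop.mp (hgeo.eventually_lt_const hε2)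
  refine ⟨N + M, fun K hK => ?_⟩
  have hKm : K = N + (K - N) := by omega
  have h1 := key (K - N)
  have h2 := hM (K - N) (by omega)
  rw [Real.dist_eq, sub_zero, abs_of_nonneg (hu0 K), hKm]
  linarith [h1, h2]


set_option maxHeartbeats 1000000 in
/-- **Gradient equivalence of explicit unrolling and implicit differentiation
(Theorem 3).** Let `Φ : ℝ^p × ℝ^n → ℝ^n` be `C¹`, fix `θ` and `x₀`, and let the
unrolled iterates satisfy `x 0 t = x₀`, `x (i+1) t = Φ (t, x i t)`. Suppose
`x K θ → xstar`, `xstar = Φ (θ, xstar)`, and the state Jacobian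
`J = D₂Φ(θ, xstar)` satisfies `‖J‖ < 1`. Then `I - J` is invertible, the
derivative of the `K`-layer unrolling has the closed form
`D_θ x_K(θ) = Σ_{i=1}^{K} (J_{K-1} ∘ ⋯ ∘ J_i) ∘ D₁Φ(θ, x_{i-1}(θ))` (with
`J_j = D₂Φ(θ, x_j(θ))`), and it converges in operator norm, as `K → ∞`, to the
implicit-differentiation gradient `(I - J)⁻¹ ∘ D₁Φ(θ, xstar)`. -/
theorem unrolled_fderiv_tendsto_implicit {p n : ℕ}
    (Φ : (EuclideanSpace ℝ (Fin p)) × (EuclideanSpace ℝ (Fin n)) → EuclideanSpace ℝ (Fin n))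
    (hΦ : ContDiff ℝ 1 Φ)
    (θ : EuclideanSpace ℝ (Fin p)) (x₀ : EuclideanSpace ℝ (Fin n))
    (x : ℕ → EuclideanSpace ℝ (Fin p) → EuclideanSpace ℝ (Fin n))
    (hx0 : ∀ t, x 0 t = x₀)
    (hxs : ∀ i t, x (i + 1) t = Φ (t, x i t))
    (xstar : EuclideanSpace ℝ (Fin n))
    (hlim : Filter.Tendsto (fun K => x K θ) Filter.atTop (𝓝 xstar))
    (hfix : xstar = Φ (θ, xstar))
    (hJ : ‖fderiv ℝ (fun y => Φ (θ, y)) xstar‖ < 1) :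
    IsUnit (ContinuousLinearMap.id ℝ (EuclideanSpace ℝ (Fin n)) -
      fderiv ℝ (fun y => Φ (θ, y)) xstar) ∧
    (∀ K : ℕ, 1 ≤ K →
      fderiv ℝ (x K) θ =
        ∑ i ∈ Finset.Icc 1 K,
          (ordComp (fun j => fderiv ℝ (fun y => Φ (θ, y)) (x j θ)) i (K - i)).comp
            (fderiv ℝ (fun t => Φ (t, x (i - 1) θ)) θ)) ∧
    Filter.Tendsto (fun K => fderiv ℝ (x K) θ) Filter.atTop
      (𝓝 ((Ring.inverse (ContinuousLinearMap.id ℝ (EuclideanSpace ℝ (Fin n)) -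
        fderiv ℝ (fun y => Φ (θ, y)) xstar)).comp
        (fderiv ℝ (fun t => Φ (t, xstar)) θ))) := by
  have hΦd : Differentiable ℝ Φ := hΦ.differentiable one_ne_zero
  have hdiff : ∀ z, HasFDerivAt Φ (fderiv ℝ Φ z) z := fun z => (hΦd z).hasFDerivAt
  have hA : ∀ y : EuclideanSpace ℝ (Fin n), HasFDerivAt (fun t => Φ (t, y))
      ((fderiv ℝ Φ (θ, y)).comp (ContinuousLinearMap.inl ℝ _ _)) θ :=
    fun y => (hdiff (θ, y)).comp θ (hasFDerivAt_prodMk_left θ y)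
  have hB : ∀ y : EuclideanSpace ℝ (Fin n), HasFDerivAt (fun y' => Φ (θ, y'))
      ((fderiv ℝ Φ (θ, y)).comp (ContinuousLinearMap.inr ℝ _ _)) y :=
    fun y => (hdiff (θ, y)).comp y (hasFDerivAt_prodMk_right θ y)
  have hAe : ∀ y : EuclideanSpace ℝ (Fin n), fderiv ℝ (fun t => Φ (t, y)) θ =
      (fderiv ℝ Φ (θ, y)).comp (ContinuousLinearMap.inl ℝ _ _) := fun y => (hA y).fderiv
  have hBe : ∀ y : EuclideanSpace ℝ (Fin n), fderiv ℝ (fun y' => Φ (θ, y')) y =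
      (fderiv ℝ Φ (θ, y)).comp (ContinuousLinearMap.inr ℝ _ _) := fun y => (hB y).fderiv
  set J' : ℕ → EuclideanSpace ℝ (Fin n) →L[ℝ] EuclideanSpace ℝ (Fin n) :=
    fun j => fderiv ℝ (fun y => Φ (θ, y)) (x j θ) with hJ'def
  set A' : ℕ → EuclideanSpace ℝ (Fin p) →L[ℝ] EuclideanSpace ℝ (Fin n) :=
    fun i => fderiv ℝ (fun t => Φ (t, x i θ)) θ with hA'def
  set Jst : EuclideanSpace ℝ (Fin n) →L[ℝ] EuclideanSpace ℝ (Fin n) :=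
    fderiv ℝ (fun y => Φ (θ, y)) xstar with hJstdef
  set Ast : EuclideanSpace ℝ (Fin p) →L[ℝ] EuclideanSpace ℝ (Fin n) :=
    fderiv ℝ (fun t => Φ (t, xstar)) θ with hAstdef
  have hdx : ∀ K, DifferentiableAt ℝ (x K) θ := by
    intro K
    induction K with
    | zero =>
      have hc : x 0 = fun _ => x₀ := funext hx0
      rw [hc]; exact differentiableAt_const _
    | succ K ih =>
      have hxe : x (K + 1) = fun t => Φ (t, x K t) := funext (hxs K)
      rw [hxe]
      exact DifferentiableAt.comp θ (hΦd (θ, x K θ)) (differentiableAt_id.prodMk ih)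
  have hrec : ∀ K, fderiv ℝ (x (K + 1)) θ = (J' K).comp (fderiv ℝ (x K) θ) + A' K := by
    intro K
    have hxe : x (K + 1) = fun t => Φ (t, x K t) := funext (hxs K)
    have hx' : HasFDerivAt (x K) (fderiv ℝ (x K) θ) θ := (hdx K).hasFDerivAt
    have h1 : HasFDerivAt (x (K + 1))
        ((fderiv ℝ Φ (θ, x K θ)).comp
          ((ContinuousLinearMap.id ℝ (EuclideanSpace ℝ (Fin p))).prod (fderiv ℝ (x K) θ))) θ := by
      rw [hxe]
      exact (hdiff (θ, x K θ)).comp θ ((hasFDerivAt_id θ).prodMk hx')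
    rw [h1.fderiv]
    refine ContinuousLinearMap.ext fun v => ?_
    simp only [hJ'def, hA'def, hBe (x K θ), hAe (x K θ), ContinuousLinearMap.comp_apply,
      ContinuousLinearMap.add_apply, ContinuousLinearMap.prod_apply,
      ContinuousLinearMap.coe_id', id_eq, ContinuousLinearMap.inl_apply,
      ContinuousLinearMap.inr_apply]
    rw [← map_add]
    congr 1
    simp [Prod.ext_iff]
  have hD0 : fderiv ℝ (x 0) θ = 0 := by
    have hc : x 0 = fun _ => x₀ := funext hx0
    rw [hc]; exact fderiv_const_apply x₀
  have hunit : IsUnit ((1 : EuclideanSpace ℝ (Fin n) →L[ℝ] EuclideanSpace ℝ (Fin n)) - Jst) :=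
    (Units.oneSub Jst hJ).isUnit
  have hone : (ContinuousLinearMap.id ℝ (EuclideanSpace ℝ (Fin n)))
      = (1 : EuclideanSpace ℝ (Fin n) →L[ℝ] EuclideanSpace ℝ (Fin n)) := rfl
  refine ⟨by rw [hone]; exact hunit, ?_, ?_⟩
  · intro K hK
    obtain ⟨K', rfl⟩ : ∃ K', K = K' + 1 := ⟨K - 1, by omega⟩
    exact ordComp_sum_formula J' A' (fun K => fderiv ℝ (x K) θ) hD0 hrec K'
  · rw [hone]
    set L : EuclideanSpace ℝ (Fin p) →L[ℝ] EuclideanSpace ℝ (Fin n) :=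
      (Ring.inverse ((1 : EuclideanSpace ℝ (Fin n) →L[ℝ] EuclideanSpace ℝ (Fin n)) - Jst)).comp Ast
      with hLdef
    have hL : Jst.comp L + Ast = L := by
      have h1 : (((1 : EuclideanSpace ℝ (Fin n) →L[ℝ] EuclideanSpace ℝ (Fin n)) - Jst) *
          Ring.inverse ((1 : EuclideanSpace ℝ (Fin n) →L[ℝ] EuclideanSpace ℝ (Fin n)) - Jst)) = 1 :=
        Ring.mul_inverse_cancel _ hunit
      rw [sub_mul, one_mul, ContinuousLinearMap.mul_def] at h1
      have h2 : L - Jst.comp L = Ast := by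
        rw [hLdef, ← ContinuousLinearMap.comp_assoc, ← ContinuousLinearMap.sub_comp, h1]
        exact ContinuousLinearMap.id_comp Ast
      rw [← h2]; abel
    have hcont : Continuous (fderiv ℝ Φ) := hΦ.continuous_fderiv one_ne_zero
    have hpair : Filter.Tendsto (fun K => (θ, x K θ)) Filter.atTop (𝓝 (θ, xstar)) :=
      Filter.Tendsto.prodMk_nhds tendsto_const_nhds hlim
    have hfull : Filter.Tendsto (fun K => fderiv ℝ Φ (θ, x K θ)) Filter.atTop
        (𝓝 (fderiv ℝ Φ (θ, xstar))) := (hcont.tendsto _).comp hpair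
    have hφr : Continuous (fun g : (EuclideanSpace ℝ (Fin p) × EuclideanSpace ℝ (Fin n))
        →L[ℝ] EuclideanSpace ℝ (Fin n) => g.comp (ContinuousLinearMap.inl ℝ _ _)) :=
      continuous_id.clm_comp continuous_const
    have hφl : Continuous (fun g : (EuclideanSpace ℝ (Fin p) × EuclideanSpace ℝ (Fin n))
        →L[ℝ] EuclideanSpace ℝ (Fin n) => g.comp (ContinuousLinearMap.inr ℝ _ _)) :=
      continuous_id.clm_comp continuous_const
    have hJc : Filter.Tendsto J' Filter.atTop (𝓝 Jst) := by
      have h1 : J' = fun K => (fderiv ℝ Φ (θ, x K θ)).comp (ContinuousLinearMap.inr ℝ _ _) :=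
        funext fun K => hBe (x K θ)
      rw [h1, hJstdef, hBe xstar]
      exact (hφl.tendsto _).comp hfull
    have hAc : Filter.Tendsto A' Filter.atTop (𝓝 Ast) := by
      have h1 : A' = fun K => (fderiv ℝ Φ (θ, x K θ)).comp (ContinuousLinearMap.inl ℝ _ _) :=
        funext fun K => hAe (x K θ)
      rw [h1, hAstdef, hAe xstar]
      exact (hφr.tendsto _).comp hfull
    set u : ℕ → ℝ := fun K => ‖fderiv ℝ (x K) θ - L‖ with hudef
    set c : ℕ → ℝ := fun K => ‖J' K - Jst‖ * ‖L‖ + ‖A' K - Ast‖ with hcdef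
    set r : ℝ := (1 + ‖Jst‖) / 2 with hrdef
    have hJr : ‖Jst‖ < r := by rw [hrdef]; linarith [hJ]
    have hr1 : r < 1 := by rw [hrdef]; linarith [hJ]
    have hr0 : (0 : ℝ) ≤ r := by
      rw [hrdef]; have := norm_nonneg Jst; linarith
    have hcz : Filter.Tendsto c Filter.atTop (𝓝 0) := by
      have h1 := (hJc.sub_const Jst).norm
      rw [sub_self, norm_zero] at h1
      have h2 := (hAc.sub_const Ast).norm
      rw [sub_self, norm_zero] at h2
      have h3 := (h1.mul_const ‖L‖).add h2
      rw [zero_mul, add_zero] at h3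
      exact h3
    have hJle : ∀ᶠ K in Filter.atTop, ‖J' K‖ ≤ r := hJc.norm.eventually_le_const hJr
    have hrecb : ∀ᶠ K in Filter.atTop, u (K + 1) ≤ r * u K + c K := by
      filter_upwards [hJle] with K hK
      have heq : fderiv ℝ (x (K + 1)) θ - L =
          (J' K).comp (fderiv ℝ (x K) θ - L) + ((J' K - Jst).comp L + (A' K - Ast)) :=
        calc fderiv ℝ (x (K + 1)) θ - L
            = ((J' K).comp (fderiv ℝ (x K) θ) + A' K) - (Jst.comp L + Ast) := by
              rw [hrec K, hL]
          _ = (J' K).comp (fderiv ℝ (x K) θ - L) + ((J' K - Jst).comp L + (A' K - Ast)) := by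
              rw [ContinuousLinearMap.comp_sub, ContinuousLinearMap.sub_comp]; abel
      have hb1 : ‖(J' K).comp (fderiv ℝ (x K) θ - L)‖ ≤ r * u K :=
        calc ‖(J' K).comp (fderiv ℝ (x K) θ - L)‖ ≤ ‖J' K‖ * ‖fderiv ℝ (x K) θ - L‖ :=
              ContinuousLinearMap.opNorm_comp_le _ _
          _ ≤ r * u K := mul_le_mul_of_nonneg_right hK (norm_nonneg _)
      have hb2 : ‖(J' K - Jst).comp L + (A' K - Ast)‖ ≤ c K :=
        calc ‖(J' K - Jst).comp L + (A' K - Ast)‖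
            ≤ ‖(J' K - Jst).comp L‖ + ‖A' K - Ast‖ := norm_add_le _ _
          _ ≤ ‖J' K - Jst‖ * ‖L‖ + ‖A' K - Ast‖ := by
              gcongr; exact ContinuousLinearMap.opNorm_comp_le _ _
      calc u (K + 1) = ‖fderiv ℝ (x (K + 1)) θ - L‖ := rfl
        _ ≤ ‖(J' K).comp (fderiv ℝ (x K) θ - L)‖ + ‖(J' K - Jst).comp L + (A' K - Ast)‖ := by
            rw [heq]; exact norm_add_le _ _
        _ ≤ r * u K + c K := add_le_add hb1 hb2
    have hu0 : ∀ K, (0 : ℝ) ≤ u K := fun K => norm_nonneg _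
    have hfin := tendsto_zero_of_rec u c r hr0 hr1 hu0 hcz hrecb
    exact tendsto_iff_norm_sub_tendsto_zero.mpr hfin
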